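/- For every Pierce sequence σ ∈ Σ, -1/2 ≤ E*(σ) ≤ 0, where E*(σ) = Σ_{n=1}^∞ (-1)^n n/(σ_1···σ_{n+1}). Consequently, the error-sum function E(x) = Σ_{n=1}^∞ (x - s_n(x)) of Pierce expansions satisfies -1/2 < E(x) ≤ 0 for all x ∈ [0,1]. -/

import Mathlib

open scoped BigOperators

/-- Reciprocal of an extended natural number as a real, with `1/∞ = 0`. -/
noncomputable def pinv (a : ℕ∞) : ℝ := ((a.toNat : ℕ) : ℝ)⁻¹

/-- First Pierce digit: `⌊1/x⌋` for `x ≠ 0`, and `∞` for `x = 0`. -/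
noncomputable def pd1 (x : ℝ) : ℕ∞ := if x = 0 then ⊤ else (⌊x⁻¹⌋₊ : ℕ∞)

/-- Pierce map `T(x) = 1 - ⌊1/x⌋ x` for `x ≠ 0`, `T(0) = 0`. -/
noncomputable def pT (x : ℝ) : ℝ := if x = 0 then 0 else 1 - (⌊x⁻¹⌋₊ : ℝ) * x

/-- `n`-th Pierce digit `d_n(x) = d_1(T^{n-1} x)` (for `n ≥ 1`). -/
noncomputable def pdig (n : ℕ) (x : ℝ) : ℕ∞ := pd1 (pT^[n-1] x)

/-- `1/(d_1(x) ⋯ d_n(x))`, with the convention that a factor `∞` makes it `0`. -/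
noncomputable def pprodR (n : ℕ) (x : ℝ) : ℝ := ∏ k ∈ Finset.Icc 1 n, pinv (pdig k x)

/-- `n`-th partial sum `s_n(x)` of the Pierce expansion of `x`. -/
noncomputable def psum (n : ℕ) (x : ℝ) : ℝ :=
  ∑ k ∈ Finset.Icc 1 n, (-1 : ℝ) ^ (k + 1) * pprodR k x

/-- The error-sum function of Pierce expansions `E(x) = Σ_{n≥1} (x - s_n(x))`. -/
noncomputable def pE (x : ℝ) : ℝ := ∑' n : ℕ, (x - psum (n + 1) x)

/-- A Pierce sequence (0-indexed: `σ k` is the paper's `σ_{k+1}`): terms are positive, strictly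
increasing while finite, and once a term is `∞` all later terms are `∞`. -/
def IsPierce (σ : ℕ → ℕ∞) : Prop :=
  1 ≤ σ 0 ∧ ∀ n, σ n < σ (n + 1) ∨ (σ n = ⊤ ∧ σ (n + 1) = ⊤)

/-- `n`-th partial sum `φ_n(σ)`. -/
noncomputable def pphiN (n : ℕ) (σ : ℕ → ℕ∞) : ℝ :=
  ∑ k ∈ Finset.range n, (-1 : ℝ) ^ k * ∏ i ∈ Finset.range (k + 1), pinv (σ i)

/-- `φ(σ) = Σ_{k≥1} (-1)^{k+1}/(σ_1 ⋯ σ_k)`. -/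
noncomputable def pphi (σ : ℕ → ℕ∞) : ℝ :=
  ∑' k : ℕ, (-1 : ℝ) ^ k * ∏ i ∈ Finset.range (k + 1), pinv (σ i)

/-- The error-sum function of Pierce sequences `E*(σ) = Σ_{n≥1} (φ(σ) - φ_n(σ))`. -/
noncomputable def pEstar (σ : ℕ → ℕ∞) : ℝ := ∑' n : ℕ, (pphi σ - pphiN (n + 1) σ)

/-- The series formula `Σ_{n≥1} (-1)^n n/(σ_1 ⋯ σ_{n+1})` for the error-sum of a sequence. -/
noncomputable def pEstarSeries (σ : ℕ → ℕ∞) : ℝ :=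
  ∑' n : ℕ, (-1 : ℝ) ^ (n + 1) * (n + 1) * ∏ i ∈ Finset.range (n + 2), pinv (σ i)

/-- The metric `ρ(x,y) = 1/x + 1/y` for `x ≠ y` (with `1/∞ = 0`), `ρ(x,x) = 0`. -/
noncomputable def prho (x y : ℕ∞) : ℝ := if x = y then 0 else pinv x + pinv y

/-- The metric `ρ^ℕ(σ,τ) = Σ_{n≥1} ρ(σ_n, τ_n)/n!` on sequences. -/
noncomputable def prhoN (σ τ : ℕ → ℕ∞) : ℝ :=
  ∑' n : ℕ, prho (σ n) (τ n) / ((n + 1).factorial : ℝ)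
section Aux

open Finset Function

lemma pinv_nn (a : ℕ∞) : 0 ≤ pinv a := by unfold pinv; positivity

lemma pinv_le_one' (a : ℕ∞) : pinv a ≤ 1 := by
  unfold pinv
  rcases Nat.eq_zero_or_pos a.toNat with h | h
  · simp [h]
  · rw [inv_le_one_iff₀]
    right; exact_mod_cast h

lemma pinv_le_of_le {a : ℕ∞} {m : ℕ} (hm : 0 < m) (h : (m : ℕ∞) ≤ a) :
    pinv a ≤ (m : ℝ)⁻¹ := by
  rcases eq_or_ne a ⊤ with rfl | ha
  · have : (0:ℝ) ≤ (m:ℝ)⁻¹ := by positivity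
    simpa [pinv] using this
  · lift a to ℕ using ha
    have hma : m ≤ a := by exact_mod_cast h
    unfold pinv
    simp only [ENat.toNat_coe]
    exact inv_anti₀ (by exact_mod_cast hm) (by exact_mod_cast hma)

lemma alt_bounds (b : ℕ → ℝ) (hb0 : ∀ n, 0 ≤ b n) (hmono : ∀ n, b (n + 1) ≤ b n)
    (hsum : Summable (fun n => (-1 : ℝ) ^ (n + 1) * b n)) :
    -(b 0) ≤ (∑' n, (-1 : ℝ) ^ (n + 1) * b n) ∧ (∑' n, (-1 : ℝ) ^ (n + 1) * b n) ≤ 0 := by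
  have h2 : Function.Injective (fun k : ℕ => 2 * k) := fun a b h => by dsimp at h; omega
  have h2' : Function.Injective (fun k : ℕ => 2 * k + 1) := fun a b h => by dsimp at h; omega
  have pairs : ∀ f : ℕ → ℝ, Summable f → ∑' n, f n = ∑' k, (f (2 * k) + f (2 * k + 1)) := by
    intro f hf
    have he : Summable (fun k => f (2 * k)) := hf.comp_injective h2
    have ho : Summable (fun k => f (2 * k + 1)) := hf.comp_injective h2'
    rw [← tsum_even_add_odd he ho, Summable.tsum_add he ho]
  have hev : ∀ k : ℕ, ((-1 : ℝ)) ^ (2 * k + 1 + 1) = 1 := fun k => Even.neg_one_pow ⟨k + 1, by ring⟩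
  have hod : ∀ k : ℕ, ((-1 : ℝ)) ^ (2 * k + 1) = -1 := fun k => Odd.neg_one_pow ⟨k, by ring⟩
  have hod2 : ∀ k : ℕ, ((-1 : ℝ)) ^ (2 * k + 1 + 1 + 1) = -1 :=
    fun k => Odd.neg_one_pow ⟨k + 1, by ring⟩
  constructor
  · rw [Summable.tsum_eq_zero_add hsum]
    have hs1 : Summable (fun n => (-1 : ℝ) ^ (n + 1 + 1) * b (n + 1)) :=
      (summable_nat_add_iff 1).2 hsum
    have hnn : (0:ℝ) ≤ ∑' n, (-1 : ℝ) ^ (n + 1 + 1) * b (n + 1) := by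
      rw [pairs _ hs1]
      refine tsum_nonneg fun k => ?_
      have e1 : (-1 : ℝ) ^ (2 * k + 1 + 1) * b (2 * k + 1) = b (2 * k + 1) := by
        rw [hev k, one_mul]
      have e2 : (-1 : ℝ) ^ (2 * k + 1 + 1 + 1) * b (2 * k + 1 + 1) = -b (2 * k + 2) := by
        rw [hod2 k, neg_one_mul]
      rw [e1, e2]
      have := hmono (2 * k + 1)
      linarith
    have h0 : (-1 : ℝ) ^ (0 + 1) * b 0 = -(b 0) := by norm_num
    rw [h0]; linarith
  · rw [pairs _ hsum]
    refine tsum_nonpos fun k => ?_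
    have e1 : (-1 : ℝ) ^ (2 * k + 1) * b (2 * k) = -b (2 * k) := by rw [hod k, neg_one_mul]
    have e2 : (-1 : ℝ) ^ (2 * k + 1 + 1) * b (2 * k + 1) = b (2 * k + 1) := by
      rw [hev k, one_mul]
    rw [e1, e2]
    have := hmono (2 * k)
    linarith

end Aux
section Part1

lemma sigma_ge {σ : ℕ → ℕ∞} (hσ : IsPierce σ) : ∀ n, ((n + 1 : ℕ) : ℕ∞) ≤ σ n := by
  intro n
  induction n with
  | zero => simpa using hσ.1
  | succ n ih =>
    rcases hσ.2 n with h | h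
    · have hlt : ((n + 1 : ℕ) : ℕ∞) < σ (n + 1) := lt_of_le_of_lt ih h
      have : ((n + 1 : ℕ) : ℕ∞) + 1 ≤ σ (n + 1) := Order.add_one_le_of_lt hlt
      simpa [Nat.cast_add, Nat.cast_one] using this
    · rw [h.2]; exact le_top

lemma pinv_sigma_le {σ : ℕ → ℕ∞} (hσ : IsPierce σ) (n : ℕ) :
    pinv (σ n) ≤ ((n : ℝ) + 1)⁻¹ := by
  have := pinv_le_of_le (m := n + 1) (Nat.succ_pos n) (sigma_ge hσ n)
  simpa using this

/-- `P σ n = 1/(σ_1 ⋯ σ_n)`. -/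
noncomputable def pPd (σ : ℕ → ℕ∞) (n : ℕ) : ℝ := ∏ i ∈ Finset.range n, pinv (σ i)

/-- `pAd σ n = (n+1)/(σ_1 ⋯ σ_{n+2})`. -/
noncomputable def pAd (σ : ℕ → ℕ∞) (n : ℕ) : ℝ := ((n : ℝ) + 1) * pPd σ (n + 2)

lemma pPd_nonneg (σ : ℕ → ℕ∞) (n : ℕ) : 0 ≤ pPd σ n :=
  Finset.prod_nonneg fun i _ => pinv_nn _

lemma pPd_succ (σ : ℕ → ℕ∞) (n : ℕ) : pPd σ (n + 1) = pPd σ n * pinv (σ n) :=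
  Finset.prod_range_succ _ _

lemma pAd_nonneg (σ : ℕ → ℕ∞) (n : ℕ) : 0 ≤ pAd σ n :=
  mul_nonneg (by positivity) (pPd_nonneg _ _)

lemma pAd_anti {σ : ℕ → ℕ∞} (hσ : IsPierce σ) (n : ℕ) : pAd σ (n + 1) ≤ pAd σ n := by
  have h1 : pinv (σ (n + 2)) ≤ ((n : ℝ) + 3)⁻¹ := by
    have := pinv_sigma_le hσ (n + 2)
    have e : (((n + 2 : ℕ) : ℝ) + 1) = (n : ℝ) + 3 := by push_cast; ring
    rwa [e] at this
  have h3 : (0 : ℝ) < (n : ℝ) + 3 := by positivity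
  have hkey : ((n : ℝ) + 2) * ((n : ℝ) + 3)⁻¹ ≤ 1 := by
    rw [← div_eq_mul_inv, div_le_one h3]; linarith
  have hPnn := pPd_nonneg σ (n + 2)
  calc pAd σ (n + 1) = ((n : ℝ) + 2) * (pPd σ (n + 2) * pinv (σ (n + 2))) := by
        rw [pAd, pPd_succ]
        push_cast; ring
    _ ≤ ((n : ℝ) + 2) * (pPd σ (n + 2) * ((n : ℝ) + 3)⁻¹) := by
        apply mul_le_mul_of_nonneg_left _ (by positivity)
        exact mul_le_mul_of_nonneg_left h1 hPnn
    _ = pPd σ (n + 2) * (((n : ℝ) + 2) * ((n : ℝ) + 3)⁻¹) := by ring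
    _ ≤ pPd σ (n + 2) * 1 := mul_le_mul_of_nonneg_left hkey hPnn
    _ ≤ pPd σ (n + 2) * ((n : ℝ) + 1) := by
        apply mul_le_mul_of_nonneg_left _ hPnn
        have : (0:ℝ) ≤ (n : ℝ) := Nat.cast_nonneg n
        linarith
    _ = pAd σ n := by rw [pAd]; ring

lemma pinv_sigma_half {σ : ℕ → ℕ∞} (hσ : IsPierce σ) {i : ℕ} (hi : 1 ≤ i) :
    pinv (σ i) ≤ (1 / 2 : ℝ) := by
  have h := pinv_sigma_le hσ i
  have h2 : ((i : ℝ) + 1)⁻¹ ≤ (1 / 2 : ℝ) := by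
    rw [show (1 / 2 : ℝ) = (2 : ℝ)⁻¹ by norm_num]
    apply inv_anti₀ (by norm_num)
    have : (1 : ℝ) ≤ (i : ℝ) := by exact_mod_cast hi
    linarith
  linarith

lemma pPd_le {σ : ℕ → ℕ∞} (hσ : IsPierce σ) (n : ℕ) :
    pPd σ (n + 2) ≤ (1 / 2 : ℝ) ^ (n + 1) := by
  induction n with
  | zero =>
    have h2 : pPd σ 2 = pinv (σ 0) * pinv (σ 1) := by
      rw [show (2:ℕ) = 1 + 1 from rfl, pPd_succ, show (1:ℕ) = 0 + 1 from rfl, pPd_succ]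
      simp [pPd]
    rw [h2, pow_one]
    calc pinv (σ 0) * pinv (σ 1) ≤ 1 * (1 / 2 : ℝ) :=
          mul_le_mul (pinv_le_one' _) (pinv_sigma_half hσ le_rfl) (pinv_nn _) zero_le_one
      _ = 1 / 2 := one_mul _
  | succ n ih =>
    rw [pPd_succ, pow_succ]
    exact mul_le_mul ih (pinv_sigma_half hσ (by omega)) (pinv_nn _) (by positivity)

lemma pAd_summable {σ : ℕ → ℕ∞} (hσ : IsPierce σ) :
    Summable (fun n => (-1 : ℝ) ^ (n + 1) * pAd σ n) := by
  have hg : Summable (fun n : ℕ => ((n : ℝ) + 1) * (1 / 2 : ℝ) ^ (n + 1)) := by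
    have h0 : Summable (fun n : ℕ => (n : ℝ) ^ 1 * (1 / 2 : ℝ) ^ n) :=
      summable_pow_mul_geometric_of_norm_lt_one 1 (by norm_num [Real.norm_eq_abs, abs_of_nonneg])
    have h1 : Summable (fun n : ℕ => ((n + 1 : ℕ) : ℝ) ^ 1 * (1 / 2 : ℝ) ^ (n + 1)) :=
      (summable_nat_add_iff 1).2 h0
    refine h1.congr fun n => ?_
    push_cast; ring
  refine Summable.of_norm_bounded hg fun n => ?_
  rw [norm_mul, norm_pow, norm_neg, norm_one, one_pow, one_mul,
    Real.norm_of_nonneg (pAd_nonneg σ n)]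
  exact mul_le_mul_of_nonneg_left (pPd_le hσ n) (by positivity)

lemma part1 (σ : ℕ → ℕ∞) (hσ : IsPierce σ) :
    -(1 / 2 : ℝ) ≤ pEstarSeries σ ∧ pEstarSeries σ ≤ 0 := by
  have hrw : pEstarSeries σ = ∑' n, (-1 : ℝ) ^ (n + 1) * pAd σ n := by
    refine tsum_congr fun n => ?_
    rw [pAd, pPd]
    ring
  obtain ⟨hlo, hhi⟩ := alt_bounds (pAd σ) (pAd_nonneg σ) (pAd_anti hσ) (pAd_summable hσ)
  rw [hrw]
  refine ⟨le_trans ?_ hlo, hhi⟩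
  have h0 : pAd σ 0 ≤ 1 / 2 := by
    have := pPd_le hσ 0
    rw [pAd]
    norm_num at this ⊢
    linarith
  linarith

end Part1
section Part2

lemma pT_zero : pT 0 = 0 := by simp [pT]

lemma pinv_pd1_zero : pinv (pd1 0) = 0 := by simp [pd1, pinv]

lemma one_le_inv_aux {y : ℝ} (hy : 0 < y) (hy1 : y ≤ 1) : (1 : ℝ) ≤ y⁻¹ := by
  nlinarith [mul_inv_cancel₀ (ne_of_gt hy), inv_pos.2 hy,
    mul_nonneg (inv_pos.2 hy).le (sub_nonneg.2 hy1)]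

lemma floor_inv_pos {y : ℝ} (hy : 0 < y) (hy1 : y ≤ 1) : 1 ≤ ⌊y⁻¹⌋₊ := by
  exact Nat.le_floor (by exact_mod_cast one_le_inv_aux hy hy1)

lemma pT_step {y : ℝ} (hy0 : 0 ≤ y) (hy1 : y ≤ 1) : 0 ≤ pT y ∧ pT y ≤ y := by
  rcases hy0.eq_or_lt with rfl | hy
  · simp [pT]
  · have hfl : (⌊y⁻¹⌋₊ : ℝ) ≤ y⁻¹ := Nat.floor_le (by positivity)
    have hfu : y⁻¹ < (⌊y⁻¹⌋₊ : ℝ) + 1 := Nat.lt_floor_add_one _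
    have e1 : y⁻¹ * y = 1 := inv_mul_cancel₀ (ne_of_gt hy)
    have e2 : (⌊y⁻¹⌋₊ : ℝ) * y ≤ y⁻¹ * y := mul_le_mul_of_nonneg_right hfl hy0
    have e3 : y⁻¹ * y < ((⌊y⁻¹⌋₊ : ℝ) + 1) * y := mul_lt_mul_of_pos_right hfu hy
    rw [pT, if_neg (ne_of_gt hy)]
    constructor <;> nlinarith

lemma pT_half {y : ℝ} (hy : 0 < y) (hy1 : y ≤ 1) : pT y < 1 / 2 := by
  have hfl : (⌊y⁻¹⌋₊ : ℝ) ≤ y⁻¹ := Nat.floor_le (by positivity)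
  have hfu : y⁻¹ < (⌊y⁻¹⌋₊ : ℝ) + 1 := Nat.lt_floor_add_one _
  have e1 : y⁻¹ * y = 1 := inv_mul_cancel₀ (ne_of_gt hy)
  have e2 : (⌊y⁻¹⌋₊ : ℝ) * y ≤ y⁻¹ * y := mul_le_mul_of_nonneg_right hfl hy.le
  have e3 : y⁻¹ * y < ((⌊y⁻¹⌋₊ : ℝ) + 1) * y := mul_lt_mul_of_pos_right hfu hy
  rw [pT, if_neg (ne_of_gt hy)]
  rcases le_or_gt 2 ((⌊y⁻¹⌋₊ : ℝ)) with h2 | h2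
  · -- m ≥ 2 : pT y < y ≤ 1/2
    nlinarith
  · -- m = 1
    have hm1 : (1 : ℝ) ≤ (⌊y⁻¹⌋₊ : ℝ) := by exact_mod_cast floor_inv_pos hy hy1
    have hm : (⌊y⁻¹⌋₊ : ℝ) = 1 := by
      have ha : ⌊y⁻¹⌋₊ < 2 := by exact_mod_cast h2
      have hb : 1 ≤ ⌊y⁻¹⌋₊ := floor_inv_pos hy hy1
      have hc : ⌊y⁻¹⌋₊ = 1 := by omega
      exact_mod_cast hc
    rw [hm] at e3 ⊢
    rw [e1] at e3
    linarith

/-- `x_n = T^n x`. -/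
noncomputable def aXi (x : ℝ) (n : ℕ) : ℝ := pT^[n] x

lemma aXi_succ (x : ℝ) (n : ℕ) : aXi x (n + 1) = pT (aXi x n) := by
  rw [aXi, aXi, Function.iterate_succ_apply']

lemma aXi_mem {x : ℝ} (hx0 : 0 ≤ x) (hx1 : x ≤ 1) (n : ℕ) :
    0 ≤ aXi x n ∧ aXi x n ≤ 1 := by
  induction n with
  | zero => exact ⟨hx0, hx1⟩
  | succ n ih =>
    rw [aXi_succ]
    obtain ⟨h1, h2⟩ := pT_step ih.1 ih.2
    exact ⟨h1, le_trans h2 ih.2⟩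

lemma aXi_anti {x : ℝ} (hx0 : 0 ≤ x) (hx1 : x ≤ 1) (n : ℕ) :
    aXi x (n + 1) ≤ aXi x n := by
  rw [aXi_succ]
  exact (pT_step (aXi_mem hx0 hx1 n).1 (aXi_mem hx0 hx1 n).2).2

lemma aXi_half {x : ℝ} (hx0 : 0 < x) (hx1 : x ≤ 1) (n : ℕ) :
    aXi x (n + 1) < 1 / 2 := by
  induction n with
  | zero =>
    have : aXi x 1 = pT x := by rw [aXi, Function.iterate_one]
    rw [this]; exact pT_half hx0 hx1
  | succ n ih => exact lt_of_le_of_lt (aXi_anti hx0.le hx1 (n + 1)) ih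

lemma pinv_pd1_eq {y : ℝ} (hy : y ≠ 0) : pinv (pd1 y) = ((⌊y⁻¹⌋₊ : ℕ) : ℝ)⁻¹ := by
  rw [pd1, if_neg hy, pinv, ENat.toNat_coe]

lemma pinv_pd1_half {y : ℝ} (hy0 : 0 ≤ y) (hy : y < 1 / 2) : pinv (pd1 y) ≤ 1 / 2 := by
  rcases hy0.eq_or_lt with rfl | hpos
  · rw [pinv_pd1_zero]; norm_num
  · rw [pinv_pd1_eq (ne_of_gt hpos)]
    have h2 : (2 : ℝ) ≤ y⁻¹ := by
      nlinarith [mul_inv_cancel₀ (ne_of_gt hpos), inv_pos.2 hpos]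
    have hm : 2 ≤ ⌊y⁻¹⌋₊ := Nat.le_floor (by exact_mod_cast h2)
    rw [show (1 / 2 : ℝ) = (2 : ℝ)⁻¹ by norm_num]
    exact inv_anti₀ (by norm_num) (by exact_mod_cast hm)

lemma pprodR_zero (x : ℝ) : pprodR 0 x = 1 := by simp [pprodR]

lemma pprodR_succ (x : ℝ) (n : ℕ) :
    pprodR (n + 1) x = pprodR n x * pinv (pd1 (aXi x n)) := by
  rw [pprodR, Finset.prod_Icc_succ_top (by omega), ← pprodR]
  rfl

lemma pprodR_nonneg (x : ℝ) (n : ℕ) : 0 ≤ pprodR n x :=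
  Finset.prod_nonneg fun i _ => pinv_nn _

lemma psum_succ (x : ℝ) (n : ℕ) :
    psum (n + 1) x = psum n x + (-1 : ℝ) ^ (n + 1 + 1) * pprodR (n + 1) x := by
  rw [psum, Finset.sum_Icc_succ_top (by omega), ← psum]

lemma psum_zero' (x : ℝ) : psum 0 x = 0 := by simp [psum]

lemma pierce_key {x : ℝ} (hx0 : 0 ≤ x) (hx1 : x ≤ 1) (n : ℕ) :
    x - psum n x = (-1 : ℝ) ^ n * (aXi x n * pprodR n x) := by
  induction n with
  | zero =>
    rw [psum_zero', pprodR_zero]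
    simp [aXi]
  | succ n ih =>
    rcases (aXi_mem hx0 hx1 n).1.eq_or_lt with h0 | hpos
    · have hxn : aXi x n = 0 := h0.symm
      have hxn1 : aXi x (n + 1) = 0 := by rw [aXi_succ, hxn, pT_zero]
      have hppz : pprodR (n + 1) x = 0 := by
        rw [pprodR_succ, hxn, pinv_pd1_zero, mul_zero]
      rw [psum_succ, hppz, hxn1]
      rw [← sub_sub, ih, hxn]
      ring
    · have hne : aXi x n ≠ 0 := ne_of_gt hpos
      have hm1 : 1 ≤ ⌊(aXi x n)⁻¹⌋₊ := floor_inv_pos hpos (aXi_mem hx0 hx1 n).2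
      have hmR : (1 : ℝ) ≤ ((⌊(aXi x n)⁻¹⌋₊ : ℕ) : ℝ) := by exact_mod_cast hm1
      have hm0 : ((⌊(aXi x n)⁻¹⌋₊ : ℕ) : ℝ) ≠ 0 := by linarith
      have hpv : pinv (pd1 (aXi x n)) = ((⌊(aXi x n)⁻¹⌋₊ : ℕ) : ℝ)⁻¹ := pinv_pd1_eq hne
      have hT : aXi x (n + 1) = 1 - ((⌊(aXi x n)⁻¹⌋₊ : ℕ) : ℝ) * aXi x n := by
        rw [aXi_succ, pT, if_neg hne]
      have hcanc : ((⌊(aXi x n)⁻¹⌋₊ : ℕ) : ℝ) * ((⌊(aXi x n)⁻¹⌋₊ : ℕ) : ℝ)⁻¹ = 1 :=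
        mul_inv_cancel₀ hm0
      rw [psum_succ, ← sub_sub, ih, pprodR_succ, hpv, hT]
      linear_combination (-((-1 : ℝ) ^ n * aXi x n * pprodR n x)) * hcanc

/-- `b_n = x_n / (d_1 ⋯ d_n)`. -/
noncomputable def aB (x : ℝ) (n : ℕ) : ℝ := aXi x n * pprodR n x

lemma aB_nonneg {x : ℝ} (hx0 : 0 ≤ x) (hx1 : x ≤ 1) (n : ℕ) : 0 ≤ aB x n :=
  mul_nonneg (aXi_mem hx0 hx1 n).1 (pprodR_nonneg x n)

lemma aB_anti {x : ℝ} (hx0 : 0 ≤ x) (hx1 : x ≤ 1) (n : ℕ) : aB x (n + 1) ≤ aB x n := by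
  rw [aB, aB, pprodR_succ]
  calc aXi x (n + 1) * (pprodR n x * pinv (pd1 (aXi x n)))
      ≤ aXi x (n + 1) * (pprodR n x * 1) := by
        apply mul_le_mul_of_nonneg_left _ (aXi_mem hx0 hx1 (n + 1)).1
        exact mul_le_mul_of_nonneg_left (pinv_le_one' _) (pprodR_nonneg x n)
    _ = aXi x (n + 1) * pprodR n x := by rw [mul_one]
    _ ≤ aXi x n * pprodR n x :=
        mul_le_mul_of_nonneg_right (aXi_anti hx0 hx1 n) (pprodR_nonneg x n)

lemma pprodR_half {x : ℝ} (hx0 : 0 < x) (hx1 : x ≤ 1) (n : ℕ) :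
    pprodR (n + 1) x ≤ (1 / 2 : ℝ) ^ n := by
  induction n with
  | zero =>
    rw [pprodR_succ, pprodR_zero, one_mul, pow_zero]
    exact pinv_le_one' _
  | succ n ih =>
    rw [pprodR_succ, pow_succ]
    exact mul_le_mul ih
      (pinv_pd1_half (aXi_mem hx0.le hx1 (n + 1)).1 (aXi_half hx0 hx1 n))
      (pinv_nn _) (by positivity)

lemma aB_one_lt_half {x : ℝ} (hx0 : 0 < x) (hx1 : x ≤ 1) : aB x 1 < 1 / 2 := by
  have h1 : pprodR 1 x ≤ 1 := by
    have := pprodR_half hx0 hx1 0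
    simpa using this
  calc aB x 1 = aXi x 1 * pprodR 1 x := rfl
    _ ≤ aXi x 1 * 1 := mul_le_mul_of_nonneg_left h1 (aXi_mem hx0.le hx1 1).1
    _ = aXi x 1 := mul_one _
    _ < 1 / 2 := aXi_half hx0 hx1 0

lemma aB_summable {x : ℝ} (hx0 : 0 < x) (hx1 : x ≤ 1) :
    Summable (fun n => (-1 : ℝ) ^ (n + 1) * aB x (n + 1)) := by
  refine Summable.of_norm_bounded (summable_geometric_of_lt_one (r := 1/2) (by norm_num) (by norm_num))
    fun n => ?_
  rw [norm_mul, norm_pow, norm_neg, norm_one, one_pow, one_mul,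
    Real.norm_of_nonneg (aB_nonneg hx0.le hx1 (n + 1))]
  calc aB x (n + 1) ≤ pprodR (n + 1) x := by
        rw [aB]
        exact mul_le_of_le_one_left (pprodR_nonneg x _) (aXi_mem hx0.le hx1 (n + 1)).2
    _ ≤ (1 / 2 : ℝ) ^ n := pprodR_half hx0 hx1 n

lemma psum_of_zero (n : ℕ) : psum n 0 = 0 := by
  rw [psum]
  refine Finset.sum_eq_zero fun k hk => ?_
  have hk1 : 1 ≤ k := (Finset.mem_Icc.1 hk).1
  have : pprodR k 0 = 0 := by
    rw [pprodR]
    refine Finset.prod_eq_zero (i := k) (Finset.mem_Icc.2 ⟨hk1, le_rfl⟩) ?_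
    have hfix : pT^[k - 1] (0 : ℝ) = 0 := Function.iterate_fixed pT_zero _
    rw [pdig, hfix, pinv_pd1_zero]
  rw [this, mul_zero]

lemma pE_zero : pE 0 = 0 := by
  have h : (fun n : ℕ => (0 : ℝ) - psum (n + 1) 0) = fun _ => (0 : ℝ) :=
    funext fun n => by rw [psum_of_zero]; ring
  rw [pE, h, tsum_zero]

lemma part2 (x : ℝ) (hx0 : 0 ≤ x) (hx1 : x ≤ 1) : -(1 / 2 : ℝ) < pE x ∧ pE x ≤ 0 := by
  rcases hx0.eq_or_lt with rfl | hpos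
  · rw [pE_zero]; norm_num
  · have hrw : pE x = ∑' n, (-1 : ℝ) ^ (n + 1) * aB x (n + 1) := by
      rw [pE]
      refine tsum_congr fun n => ?_
      rw [pierce_key hx0 hx1 (n + 1), aB]
    obtain ⟨hlo, hhi⟩ := alt_bounds (fun n => aB x (n + 1))
      (fun n => aB_nonneg hx0 hx1 (n + 1)) (fun n => aB_anti hx0 hx1 (n + 1))
      (aB_summable hpos hx1)
    rw [hrw]
    refine ⟨lt_of_lt_of_le ?_ hlo, hhi⟩
    have := aB_one_lt_half hpos hx1
    linarith

end Part2

theorem stmt12 :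
    (∀ σ : ℕ → ℕ∞, IsPierce σ → -(1 / 2 : ℝ) ≤ pEstarSeries σ ∧ pEstarSeries σ ≤ 0) ∧
    (∀ x ∈ Set.Icc (0 : ℝ) 1, -(1 / 2 : ℝ) < pE x ∧ pE x ≤ 0) :=
  ⟨part1, fun x hx => part2 x hx.1 hx.2⟩
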